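/- Let {B_ν}_{ν∈ℕ} be a sequence of nonempty compact convex sets in ℝⁿ converging in Hausdorff distance to a nonempty compact convex set B. Then for every extreme point x of B there exists a sequence {x_ν}_{ν∈ℕ} with each x_ν an extreme point of B_ν such that x_ν converges to x. -/

import Mathlib

open Set Filter Metric

private lemma sum_dite_fin {M : Type*} [AddCommMonoid M] {m N : ℕ} (hm : m ≤ N) (G : Fin m → M) :
    ∑ i : Fin N, (if h : (i : ℕ) < m then G ⟨i, h⟩ else 0) = ∑ j : Fin m, G j := by
  have e1 : ∑ i : Fin N, (if h : (i : ℕ) < m then G ⟨i, h⟩ else 0)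
      = ∑ k ∈ Finset.range N, (if h : k < m then G ⟨k, h⟩ else 0) :=
    Fin.sum_univ_eq_sum_range (fun k => if h : k < m then G ⟨k, h⟩ else 0) N
  have e2 : ∑ j : Fin m, G j
      = ∑ k ∈ Finset.range m, (if h : k < m then G ⟨k, h⟩ else 0) := by
    have e3 := Fin.sum_univ_eq_sum_range (fun k => if h : k < m then G ⟨k, h⟩ else 0) m
    rw [← e3]
    exact Finset.sum_congr rfl fun i _ => by rw [dif_pos i.isLt]
  rw [e1, e2]
  exact (Finset.sum_subset (Finset.range_subset_range.2 hm)
    (fun k _ hk => dif_neg (by simpa using hk))).symm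

set_option maxHeartbeats 1000000 in
/-- Carathéodory with padding to exactly `n+1` points. -/
private lemma carath_pad {n : ℕ} {s : Set (EuclideanSpace ℝ (Fin n))} (hne : s.Nonempty)
    {z : EuclideanSpace ℝ (Fin n)} (hz : z ∈ convexHull ℝ s) :
    ∃ (w : Fin (n + 1) → ℝ) (p : Fin (n + 1) → EuclideanSpace ℝ (Fin n)),
      (∀ i, 0 ≤ w i) ∧ ∑ i, w i = 1 ∧ (∀ i, p i ∈ s) ∧ ∑ i, w i • p i = z := by
  classical
  rw [convexHull_eq_union] at hz
  simp only [Set.mem_iUnion] at hz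
  obtain ⟨t, hts, hai, hzt⟩ := hz
  have hcard : Fintype.card ↥t ≤ n + 1 := by
    have h1 := hai.card_le_finrank_succ
    have h2 : Module.finrank ℝ (vectorSpan ℝ (Set.range ((↑) : ↥t → EuclideanSpace ℝ (Fin n))))
        ≤ n := le_trans (Submodule.finrank_le _) (le_of_eq finrank_euclideanSpace_fin)
    omega
  rw [Finset.mem_convexHull'] at hzt
  obtain ⟨w, hw0, hw1, hwz⟩ := hzt
  obtain ⟨s₀, hs₀⟩ := hne
  set m := Fintype.card ↥t with hm
  set e : ↥t ≃ Fin m := Fintype.equivFin ↥t with he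
  refine ⟨fun i => if h : (i : ℕ) < m then w ((e.symm ⟨i, h⟩ : ↥t) : _) else 0,
      fun i => if h : (i : ℕ) < m then ((e.symm ⟨i, h⟩ : ↥t) : _) else s₀, ?_, ?_, ?_, ?_⟩
  · intro i
    dsimp only
    by_cases h : (i : ℕ) < m
    · rw [dif_pos h]; exact hw0 _ (e.symm ⟨i, h⟩).2
    · rw [dif_neg h]
  · rw [sum_dite_fin hcard (fun j => w ((e.symm j : ↥t) : _))]
    rw [Equiv.sum_comp e.symm (fun a : ↥t => w (a : _))]
    rw [Finset.sum_coe_sort t w]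
    exact hw1
  · intro i
    dsimp only
    by_cases h : (i : ℕ) < m
    · rw [dif_pos h]; exact hts (e.symm ⟨i, h⟩).2
    · rw [dif_neg h]; exact hs₀
  · have key : ∀ i : Fin (n + 1),
        (if h : (i : ℕ) < m then w ((e.symm ⟨i, h⟩ : ↥t) : _) else 0) •
          (if h : (i : ℕ) < m then ((e.symm ⟨i, h⟩ : ↥t) : EuclideanSpace ℝ (Fin n)) else s₀) =
        (if h : (i : ℕ) < m then
          w ((e.symm ⟨i, h⟩ : ↥t) : _) • ((e.symm ⟨i, h⟩ : ↥t) : EuclideanSpace ℝ (Fin n))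
          else 0) := by
      intro i
      by_cases h : (i : ℕ) < m
      · simp [dif_pos h]
      · simp [dif_neg h]
    rw [Finset.sum_congr rfl (fun i _ => key i)]
    rw [sum_dite_fin hcard
      (fun j => w ((e.symm j : ↥t) : _) • ((e.symm j : ↥t) : EuclideanSpace ℝ (Fin n)))]
    rw [Equiv.sum_comp e.symm (fun a : ↥t => w (a : _) • (a : EuclideanSpace ℝ (Fin n)))]
    rw [Finset.sum_coe_sort t (fun y => w y • y)]
    exact hwz

/-- Convex hull of a nonempty compact set in Euclidean space is compact. -/
private lemma isCompact_convexHull' {n : ℕ} {s : Set (EuclideanSpace ℝ (Fin n))}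
    (hs : IsCompact s) (hne : s.Nonempty) : IsCompact (convexHull ℝ s) := by
  have key : convexHull ℝ s =
      (fun q : (Fin (n + 1) → ℝ) × (Fin (n + 1) → EuclideanSpace ℝ (Fin n)) =>
        ∑ i, q.1 i • q.2 i) ''
      ((stdSimplex ℝ (Fin (n + 1))) ×ˢ (Set.univ.pi fun _ => s)) := by
    apply Set.Subset.antisymm
    · intro z hz
      obtain ⟨w, p, hw0, hw1, hp, hsum⟩ := carath_pad hne hz
      exact ⟨(w, p), ⟨⟨hw0, hw1⟩, fun i _ => hp i⟩, hsum⟩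
    · rintro z ⟨⟨w, p⟩, ⟨⟨hw0, hw1⟩, hp⟩, rfl⟩
      exact (convex_convexHull ℝ s).sum_mem (fun i _ => hw0 i) hw1
        (fun i _ => subset_convexHull ℝ s (hp i (Set.mem_univ i)))
  rw [key]
  exact ((isCompact_stdSimplex _ _).prod (isCompact_univ_pi fun _ => hs)).image
    (continuous_finset_sum _ fun i _ =>
      ((continuous_apply i).comp continuous_fst).smul ((continuous_apply i).comp continuous_snd))

/-- An extreme point which is a convex combination must coincide with one of the points. -/
private lemma extreme_eq_of_combo {n N : ℕ} {s : Set (EuclideanSpace ℝ (Fin n))}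
    (hconv : Convex ℝ s) {x : EuclideanSpace ℝ (Fin n)} (hx : x ∈ Set.extremePoints ℝ s)
    (w : Fin N → ℝ) (p : Fin N → EuclideanSpace ℝ (Fin n)) (hw0 : ∀ i, 0 ≤ w i)
    (hw1 : ∑ i, w i = 1) (hp : ∀ i, p i ∈ s) (hsum : ∑ i, w i • p i = x) :
    ∃ i, p i = x := by
  have hT : convexHull ℝ (Set.range p) ⊆ s := convexHull_min (Set.range_subset_iff.2 hp) hconv
  have hxT : x ∈ convexHull ℝ (Set.range p) := by
    rw [← hsum]
    exact (convex_convexHull ℝ _).sum_mem (fun i _ => hw0 i) hw1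
      (fun i _ => subset_convexHull ℝ _ (Set.mem_range_self i))
  have hxext : x ∈ (convexHull ℝ (Set.range p)).extremePoints ℝ := by
    rw [mem_extremePoints] at hx ⊢
    exact ⟨hxT, fun x₁ h₁ x₂ h₂ h3 => hx.2 x₁ (hT h₁) x₂ (hT h₂) h3⟩
  have hmem : x ∈ Set.range p := extremePoints_convexHull_subset hxext
  exact hmem

/-- If a sequence of nonempty compact convex sets `B ν` in `ℝⁿ` converges
in Hausdorff distance to a nonempty compact convex set `Blim`, then every extreme point of
`Blim` is the limit of a sequence of extreme points of the `B ν`. -/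
theorem extreme_point_limit_of_hausdorff_tendsto
    (n : ℕ) (B : ℕ → Set (EuclideanSpace ℝ (Fin n)))
    (Blim : Set (EuclideanSpace ℝ (Fin n)))
    (hBne : ∀ ν, (B ν).Nonempty) (hBcpt : ∀ ν, IsCompact (B ν))
    (hBcvx : ∀ ν, Convex ℝ (B ν))
    (hlne : Blim.Nonempty) (hlcpt : IsCompact Blim) (hlcvx : Convex ℝ Blim)
    (hconv : Filter.Tendsto (fun ν => Metric.hausdorffDist (B ν) Blim)
      Filter.atTop (nhds 0))
    (x : EuclideanSpace ℝ (Fin n)) (hx : x ∈ Set.extremePoints ℝ Blim) :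
    ∃ xs : ℕ → EuclideanSpace ℝ (Fin n),
      (∀ ν, xs ν ∈ Set.extremePoints ℝ (B ν)) ∧
      Filter.Tendsto xs Filter.atTop (nhds x) := by
  classical
  have hedist : ∀ ν, EMetric.hausdorffEdist (B ν) Blim ≠ ⊤ := fun ν =>
    Metric.hausdorffEdist_ne_top_of_nonempty_of_bounded (hBne ν) hlne (hBcpt ν).isBounded
      hlcpt.isBounded
  have hext : ∀ ν, (Set.extremePoints ℝ (B ν)).Nonempty := fun ν =>
    (hBcpt ν).extremePoints_nonempty (hBne ν)
  set d : ℕ → ℝ := fun ν => Metric.infDist x (Set.extremePoints ℝ (B ν)) with hd_def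
  have hd0 : ∀ ν, 0 ≤ d ν := fun ν => Metric.infDist_nonneg
  have hmain : Filter.Tendsto d Filter.atTop (nhds 0) := by
    by_contra hcon
    rw [Metric.tendsto_atTop] at hcon
    push_neg at hcon
    obtain ⟨ε, hε, hfreq⟩ := hcon
    have hfreq' : ∀ N, ∃ ν ≥ N, ε ≤ d ν := by
      intro N
      obtain ⟨ν, hν, h⟩ := hfreq N
      exact ⟨ν, hν, by rwa [Real.dist_eq, sub_zero, abs_of_nonneg (hd0 ν)] at h⟩
    have hHD : ∀ c > (0 : ℝ), ∃ N, ∀ ν ≥ N, Metric.hausdorffDist (B ν) Blim < c := by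
      rw [Metric.tendsto_atTop] at hconv
      intro c hc
      obtain ⟨N, hN⟩ := hconv c hc
      refine ⟨N, fun ν hν => ?_⟩
      have h := hN ν hν
      rwa [Real.dist_eq, sub_zero, abs_of_nonneg Metric.hausdorffDist_nonneg] at h
    -- a fixed compact "universe" set
    obtain ⟨R, hR⟩ := hlcpt.isBounded.subset_closedBall x
    set K₀ : Set (EuclideanSpace ℝ (Fin n)) := {y | Metric.infDist y Blim ≤ 1} with hK₀def
    have hK₀closed : IsClosed K₀ :=
      isClosed_le (Metric.continuous_infDist_pt Blim) continuous_const
    have hK₀cpt : IsCompact K₀ := by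
      refine Metric.isCompact_of_isClosed_isBounded hK₀closed ?_
      refine (Metric.isBounded_closedBall (x := x) (r := R + 2)).subset ?_
      intro y hy
      have h2 : Metric.infDist y Blim < 2 := lt_of_le_of_lt hy (by norm_num)
      obtain ⟨z, hz, hdz⟩ := (Metric.infDist_lt_iff hlne).1 h2
      have hzx : dist z x ≤ R := by simpa using hR hz
      have ht : dist y x ≤ dist y z + dist z x := dist_triangle _ _ _
      simp only [Metric.mem_closedBall]
      linarith
    set D : ℕ → Set (EuclideanSpace ℝ (Fin n)) := fun m =>
      {y | Metric.infDist y Blim ≤ 1 / ((m : ℝ) + 1)} ∩ {y | ε ≤ dist x y} with hDdef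
    have hDsub : ∀ m, D m ⊆ K₀ := by
      intro m y hy
      have h1 : Metric.infDist y Blim ≤ 1 / ((m : ℝ) + 1) := hy.1
      have h0 : (0 : ℝ) ≤ (m : ℝ) := Nat.cast_nonneg m
      show Metric.infDist y Blim ≤ 1
      refine le_trans h1 ?_
      rw [div_le_one (by linarith)]
      linarith
    have hDclosed : ∀ m, IsClosed (D m) := fun m =>
      (isClosed_le (Metric.continuous_infDist_pt Blim) continuous_const).inter
        (isClosed_le continuous_const (continuous_const.dist continuous_id))
    have hDcpt : ∀ m, IsCompact (D m) := fun m =>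
      hK₀cpt.of_isClosed_subset (hDclosed m) (hDsub m)
    have hchoose : ∀ (m : ℕ) (δ : ℝ), 0 < δ → ∃ ν,
        Metric.hausdorffDist (B ν) Blim ≤ 1 / ((m : ℝ) + 1) ∧
        Metric.hausdorffDist (B ν) Blim < δ ∧ ε ≤ d ν := by
      intro m δ hδ
      obtain ⟨N₁, h₁⟩ := hHD (1 / ((m : ℝ) + 1)) (by positivity)
      obtain ⟨N₂, h₂⟩ := hHD δ hδ
      obtain ⟨ν, hν, hεd⟩ := hfreq' (max N₁ N₂)
      exact ⟨ν, (h₁ ν (le_trans (le_max_left _ _) hν)).le,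
        h₂ ν (le_trans (le_max_right _ _) hν), hεd⟩
    have hextD : ∀ (m ν : ℕ), Metric.hausdorffDist (B ν) Blim ≤ 1 / ((m : ℝ) + 1) → ε ≤ d ν →
        Set.extremePoints ℝ (B ν) ⊆ D m := by
      intro m ν h1 h2 y hy
      constructor
      · exact le_trans
          (Metric.infDist_le_hausdorffDist_of_mem (extremePoints_subset hy) (hedist ν)) h1
      · exact le_trans h2 (Metric.infDist_le_dist_of_mem hy)
    have hBsub : ∀ ν, B ν ⊆ convexHull ℝ (closure (Set.extremePoints ℝ (B ν))) := by
      intro ν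
      have h1 : closure (convexHull ℝ (Set.extremePoints ℝ (B ν))) = B ν :=
        closure_convexHull_extremePoints (hBcpt ν) (hBcvx ν)
      have h2 : IsCompact (closure (Set.extremePoints ℝ (B ν))) :=
        (hBcpt ν).of_isClosed_subset isClosed_closure
          (closure_minimal extremePoints_subset (hBcpt ν).isClosed)
      have h3 : IsClosed (convexHull ℝ (closure (Set.extremePoints ℝ (B ν)))) :=
        (isCompact_convexHull' h2 (hext ν).closure).isClosed
      calc B ν = closure (convexHull ℝ (Set.extremePoints ℝ (B ν))) := h1.symm
        _ ⊆ closure (convexHull ℝ (closure (Set.extremePoints ℝ (B ν)))) :=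
            closure_mono (convexHull_mono subset_closure)
        _ = convexHull ℝ (closure (Set.extremePoints ℝ (B ν))) := h3.closure_eq
    have hDne : ∀ m, (D m).Nonempty := by
      intro m
      obtain ⟨ν, h1, _, h3⟩ := hchoose m 1 one_pos
      exact (hext ν).mono (hextD m ν h1 h3)
    have hxD : ∀ m, x ∈ convexHull ℝ (D m) := by
      intro m
      have hcl : IsClosed (convexHull ℝ (D m)) :=
        (isCompact_convexHull' (hDcpt m) (hDne m)).isClosed
      rw [← hcl.closure_eq, Metric.mem_closure_iff]
      intro δ hδ
      obtain ⟨ν, h1, h2, h3⟩ := hchoose m δ hδ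
      have hsub : B ν ⊆ convexHull ℝ (D m) :=
        (hBsub ν).trans (convexHull_mono (closure_minimal (hextD m ν h1 h3) (hDclosed m)))
      have hxB : Metric.infDist x (B ν) < δ := by
        have hedist' : EMetric.hausdorffEdist Blim (B ν) ≠ ⊤ := by
          exact fun h => hedist ν ((Metric.hausdorffEDist_comm (s := B ν) (t := Blim)).trans h)
        have h4 : Metric.infDist x (B ν) ≤ Metric.hausdorffDist Blim (B ν) :=
          Metric.infDist_le_hausdorffDist_of_mem (extremePoints_subset hx) hedist'
        rw [Metric.hausdorffDist_comm] at h4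
        exact lt_of_le_of_lt h4 h2
      obtain ⟨z, hzB, hzd⟩ := (Metric.infDist_lt_iff (hBne ν)).1 hxB
      exact ⟨z, hsub hzB, hzd⟩
    have hrep : ∀ m, ∃ (w : Fin (n + 1) → ℝ) (p : Fin (n + 1) → EuclideanSpace ℝ (Fin n)),
        (∀ i, 0 ≤ w i) ∧ ∑ i, w i = 1 ∧ (∀ i, p i ∈ D m) ∧ ∑ i, w i • p i = x := fun m =>
      carath_pad (hDne m) (hxD m)
    choose w p hw0 hw1 hp hsum using hrep
    have hA : IsCompact ((stdSimplex ℝ (Fin (n + 1))) ×ˢ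
        (Set.univ.pi fun _ : Fin (n + 1) => K₀)) :=
      (isCompact_stdSimplex _ _).prod (isCompact_univ_pi fun _ => hK₀cpt)
    have hu : ∀ m, ((w m, p m) :
        (Fin (n + 1) → ℝ) × (Fin (n + 1) → EuclideanSpace ℝ (Fin n))) ∈
        (stdSimplex ℝ (Fin (n + 1))) ×ˢ (Set.univ.pi fun _ : Fin (n + 1) => K₀) := fun m =>
      ⟨⟨hw0 m, hw1 m⟩, fun i _ => hDsub m (hp m i)⟩
    obtain ⟨q, hqA, ψ, hψ, hqlim⟩ := hA.tendsto_subseq hu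
    have hwlim : Filter.Tendsto (fun j => w (ψ j)) Filter.atTop (nhds q.1) :=
      ((continuous_fst.tendsto q).comp hqlim)
    have hplim : Filter.Tendsto (fun j => p (ψ j)) Filter.atTop (nhds q.2) :=
      ((continuous_snd.tendsto q).comp hqlim)
    have hpilim : ∀ i, Filter.Tendsto (fun j => p (ψ j) i) Filter.atTop (nhds (q.2 i)) :=
      fun i => ((continuous_apply i).tendsto q.2).comp hplim
    have hwilim : ∀ i, Filter.Tendsto (fun j => w (ψ j) i) Filter.atTop (nhds (q.1 i)) :=
      fun i => ((continuous_apply i).tendsto q.1).comp hwlim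
    have hq0 : ∀ i, 0 ≤ q.1 i := hqA.1.1
    have hq1 : ∑ i, q.1 i = 1 := hqA.1.2
    have hqsum : ∑ i, q.1 i • q.2 i = x := by
      have h1 : Filter.Tendsto (fun j => ∑ i, w (ψ j) i • p (ψ j) i) Filter.atTop
          (nhds (∑ i, q.1 i • q.2 i)) :=
        tendsto_finset_sum _ fun i _ => (hwilim i).smul (hpilim i)
      have h2 : (fun j => ∑ i, w (ψ j) i • p (ψ j) i) = fun _ => x :=
        funext fun j => hsum (ψ j)
      rw [h2] at h1
      exact tendsto_nhds_unique h1 tendsto_const_nhds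
    have hqmem : ∀ i, q.2 i ∈ Blim := by
      intro i
      have hle : ∀ j : ℕ, Metric.infDist (p (ψ j) i) Blim ≤ 1 / ((j : ℝ) + 1) := by
        intro j
        refine le_trans (hp (ψ j) i).1 ?_
        apply one_div_le_one_div_of_le (by positivity)
        have hc : (j : ℝ) ≤ (ψ j : ℝ) := by exact_mod_cast hψ.le_apply
        linarith
      have hlim : Filter.Tendsto (fun j => Metric.infDist (p (ψ j) i) Blim) Filter.atTop
          (nhds (Metric.infDist (q.2 i) Blim)) :=
        ((Metric.continuous_infDist_pt Blim).tendsto _).comp (hpilim i)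
      have h0 : Metric.infDist (q.2 i) Blim ≤ 0 :=
        le_of_tendsto_of_tendsto hlim tendsto_one_div_add_atTop_nhds_zero_nat
          (Filter.Eventually.of_forall hle)
      exact (hlcpt.isClosed.mem_iff_infDist_zero hlne).2
        (le_antisymm h0 Metric.infDist_nonneg)
    have hqfar : ∀ i, ε ≤ dist x (q.2 i) := by
      intro i
      have hlim : Filter.Tendsto (fun j => dist x (p (ψ j) i)) Filter.atTop
          (nhds (dist x (q.2 i))) := tendsto_const_nhds.dist (hpilim i)
      exact ge_of_tendsto hlim (Filter.Eventually.of_forall fun j => (hp (ψ j) i).2)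
    obtain ⟨i, hi⟩ := extreme_eq_of_combo hlcvx hx q.1 q.2 hq0 hq1 hqmem hqsum
    have h := hqfar i
    rw [hi, dist_self] at h
    exact absurd h (not_le.2 hε)
  -- construct the sequence of extreme points
  have hsel : ∀ ν : ℕ, ∃ y ∈ Set.extremePoints ℝ (B ν), dist x y < d ν + 1 / ((ν : ℝ) + 1) := by
    intro ν
    refine (Metric.infDist_lt_iff (hext ν)).1 ?_
    show d ν < d ν + 1 / ((ν : ℝ) + 1)
    have h1 : (0 : ℝ) < 1 / ((ν : ℝ) + 1) := by positivity
    linarith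
  choose xs hxs1 hxs2 using hsel
  refine ⟨xs, hxs1, ?_⟩
  rw [tendsto_iff_dist_tendsto_zero]
  have hb : Filter.Tendsto (fun ν : ℕ => d ν + 1 / ((ν : ℝ) + 1)) Filter.atTop (nhds 0) := by
    simpa using hmain.add tendsto_one_div_add_atTop_nhds_zero_nat
  refine squeeze_zero (fun ν => dist_nonneg) (fun ν => ?_) hb
  rw [dist_comm]
  exact (hxs2 ν).le
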